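/- arXiv:1902.04553 — 4 statements merged into one kernel-verified Lean document; each statement's English description precedes it below -/
import Mathlib

section
/- The shifted Chebyshev polynomial of degree m satisfies T̃_m(x) = Σ_{i=0}^m (-1)^{m-i} [C(2m,2i)/C(m,i)] B_i^m(x), where B_i^m(x) = C(m,i) x^i (1-x)^{m-i}. -/
/-- The `i`-th Bernstein basis polynomial of degree `m`. -/
noncomputable def bern (m i : ℕ) (x : ℝ) : ℝ := (m.choose i : ℝ) * x ^ i * (1 - x) ^ (m - i)

/-- The Chebyshev polynomial of the first kind of degree `m` shifted to `[0,1]`. -/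
noncomputable def shiftedCheb (m : ℕ) (x : ℝ) : ℝ :=
  (Polynomial.Chebyshev.T ℝ (m : ℤ)).eval (2 * x - 1)

open Finset

lemma sum_even_odd {M : Type*} [AddCommMonoid M] (f : ℕ → M) (m : ℕ) :
    ∑ k ∈ range (2 * m + 1), f k =
      (∑ i ∈ range (m + 1), f (2 * i)) + ∑ i ∈ range m, f (2 * i + 1) := by
  induction m with
  | zero => simp
  | succ m ih =>
    rw [show 2 * (m + 1) + 1 = (2 * m + 1) + 1 + 1 from by ring, sum_range_succ, sum_range_succ,
      ih, sum_range_succ (fun i => f (2 * i)) (m + 1), sum_range_succ (fun i => f (2 * i + 1)) m,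
      show 2 * (m + 1) = 2 * m + 1 + 1 from by ring]
    abel

lemma cos_expansion (m : ℕ) (φ : ℝ) :
    Real.cos (2 * m * φ) =
      ∑ i ∈ range (m + 1),
        (-1 : ℝ) ^ (m - i) * ((2 * m).choose (2 * i)) *
          (Real.cos φ) ^ (2 * i) * (Real.sin φ) ^ (2 * (m - i)) := by
  have h1 : Real.cos (2 * m * φ) = ((Complex.exp (φ * Complex.I)) ^ (2 * m)).re := by
    rw [← Complex.exp_nat_mul]
    have : ((2 * m : ℕ) : ℂ) * (φ * Complex.I) = ((2 * m * φ : ℝ) : ℂ) * Complex.I := by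
      push_cast; ring
    rw [this, Complex.exp_ofReal_mul_I_re]
  rw [h1, Complex.exp_mul_I, add_pow]
  rw [Complex.re_sum]
  rw [sum_even_odd (fun k => (Complex.cos φ ^ k * (Complex.sin φ * Complex.I) ^ (2 * m - k) *
    ((2 * m).choose k : ℂ)).re) m]
  have hodd : ∑ i ∈ range m, (Complex.cos φ ^ (2 * i + 1) *
      (Complex.sin φ * Complex.I) ^ (2 * m - (2 * i + 1)) * ((2 * m).choose (2 * i + 1) : ℂ)).re = 0 := by
    apply Finset.sum_eq_zero
    intro i hi
    have hi' : i < m := Finset.mem_range.mp hi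
    have he : 2 * m - (2 * i + 1) = 2 * (m - i - 1) + 1 := by omega
    rw [he, mul_pow,
      show Complex.I ^ (2 * (m - i - 1) + 1) = (-1 : ℂ) ^ (m - i - 1) * Complex.I from by
        rw [pow_succ, pow_mul, Complex.I_sq],
      ← Complex.ofReal_cos, ← Complex.ofReal_sin,
      show ((-1 : ℂ)) ^ (m - i - 1) = (((-1 : ℝ) ^ (m - i - 1) : ℝ) : ℂ) from by push_cast; ring]
    rw [← Complex.ofReal_pow, ← Complex.ofReal_pow, ← Complex.ofReal_natCast]
    set a := (Real.cos φ) ^ (2 * i + 1)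
    set b := (Real.sin φ) ^ (2 * (m - i - 1) + 1)
    set c := ((-1 : ℝ)) ^ (m - i - 1)
    set d := (((2 * m).choose (2 * i + 1) : ℝ))
    have : (a : ℂ) * ((b : ℂ) * ((c : ℂ) * Complex.I)) * (d : ℂ) =
        ((a * b * c * d : ℝ) : ℂ) * Complex.I := by push_cast; ring
    rw [this]; simp [Complex.mul_re]
  rw [hodd, add_zero]
  apply Finset.sum_congr rfl
  intro i hi
  have hi' : i ≤ m := Nat.lt_succ_iff.mp (Finset.mem_range.mp hi)
  have he : 2 * m - 2 * i = 2 * (m - i) := by omega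
  rw [he, mul_pow,
    show Complex.I ^ (2 * (m - i)) = (-1 : ℂ) ^ (m - i) from by rw [pow_mul, Complex.I_sq],
    ← Complex.ofReal_cos, ← Complex.ofReal_sin,
    show ((-1 : ℂ)) ^ (m - i) = (((-1 : ℝ) ^ (m - i) : ℝ) : ℂ) from by push_cast; ring]
  rw [← Complex.ofReal_pow, ← Complex.ofReal_pow, ← Complex.ofReal_natCast,
    ← Complex.ofReal_mul, ← Complex.ofReal_mul, ← Complex.ofReal_mul, Complex.ofReal_re]
  ring

lemma key_Icc (m : ℕ) (x : ℝ) (hx : x ∈ Set.Icc (0:ℝ) 1) :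
    shiftedCheb m x =
      ∑ i ∈ range (m + 1),
        (-1 : ℝ) ^ (m - i) * ((2 * m).choose (2 * i)) * x ^ i * (1 - x) ^ (m - i) := by
  obtain ⟨h0, h1⟩ := hx
  set θ := Real.arccos (2 * x - 1) with hθ
  have hc : Real.cos θ = 2 * x - 1 := Real.cos_arccos (by linarith) (by linarith)
  have hcos2 : Real.cos (θ / 2) ^ 2 = x := by
    have := Real.cos_sq (θ / 2)
    rw [show 2 * (θ / 2) = θ from by ring, hc] at this
    rw [this]; ring
  have hsin2 : Real.sin (θ / 2) ^ 2 = 1 - x := by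
    have := Real.sin_sq_add_cos_sq (θ / 2)
    linarith [hcos2]
  have : shiftedCheb m x = Real.cos (2 * m * (θ / 2)) := by
    rw [shiftedCheb, ← hc, Polynomial.Chebyshev.T_real_cos]
    norm_num
    ring_nf
  rw [this, cos_expansion]
  apply Finset.sum_congr rfl
  intro i hi
  rw [pow_mul, pow_mul, hcos2, hsin2]

lemma key_all (m : ℕ) (x : ℝ) :
    shiftedCheb m x =
      ∑ i ∈ range (m + 1),
        (-1 : ℝ) ^ (m - i) * ((2 * m).choose (2 * i)) * x ^ i * (1 - x) ^ (m - i) := by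
  have hpoly : (Polynomial.Chebyshev.T ℝ (m : ℤ)).comp (Polynomial.C 2 * Polynomial.X - 1) =
      ∑ i ∈ range (m + 1),
        Polynomial.C ((-1 : ℝ) ^ (m - i) * ((2 * m).choose (2 * i))) * Polynomial.X ^ i *
          (1 - Polynomial.X) ^ (m - i) := by
    apply Polynomial.eq_of_infinite_eval_eq
    apply Set.Infinite.mono (s := Set.Icc (0:ℝ) 1)
    · intro y hy
      simp only [Set.mem_setOf_eq, Polynomial.eval_comp, Polynomial.eval_sub, Polynomial.eval_mul,
        Polynomial.eval_C, Polynomial.eval_X, Polynomial.eval_one, Polynomial.eval_finset_sum,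
        Polynomial.eval_pow]
      have := key_Icc m y hy
      rw [shiftedCheb] at this
      convert this using 2
    · exact Set.Icc_infinite (by norm_num : (0:ℝ) < 1)
  have := congrArg (Polynomial.eval x) hpoly
  simp only [Polynomial.eval_comp, Polynomial.eval_sub, Polynomial.eval_mul, Polynomial.eval_C,
    Polynomial.eval_X, Polynomial.eval_one, Polynomial.eval_finset_sum, Polynomial.eval_pow] at this
  rw [shiftedCheb]
  convert this using 2

theorem shiftedCheb_eq_bernstein_combination (m : ℕ) (x : ℝ) :
    shiftedCheb m x =
      ∑ i ∈ Finset.range (m + 1),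
        (-1 : ℝ) ^ (m - i) * (((2 * m).choose (2 * i) : ℝ) / (m.choose i : ℝ)) * bern m i x := by
  rw [key_all]
  apply Finset.sum_congr rfl
  intro i hi
  have hi' : i ≤ m := Nat.lt_succ_iff.mp (Finset.mem_range.mp hi)
  have hne : (m.choose i : ℝ) ≠ 0 := by
    exact_mod_cast (Nat.choose_pos hi').ne'
  rw [bern]
  field_simp
end

section
/- For natural numbers m ≤ t with t ≥ 1, and all 0 ≤ j ≤ t, the coefficients C(t,m,j) := Σ_{l=0}^{j} (-1)^{m-l} C(2m,2l) C(t-m,j-l) / C(t,j) satisfy √(Σ_{j=0}^t C(t,m,j)²) ≤ (t+1) e^{m²/t}, and in particular |C(t,m,j)| ≤ (t+1) e^{m²/t}. -/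
set_option maxHeartbeats 1000000

open Finset

private lemma log_one_add_le (v : ℝ) (h0 : 0 ≤ v) (h1 : v ≤ 1) :
    Real.log (1 + v) ≤ v - v ^ 2 / 4 := by
  have hpos : (0:ℝ) < 1 + v := by linarith
  rw [Real.log_le_iff_le_exp hpos]
  have hcub : 1 + v + v^2/2 + v^3/6 ≤ Real.exp v := by
    have h := Real.sum_le_exp_of_nonneg h0 4
    have e : ∑ i ∈ range 4, v^i / i.factorial = 1 + v + v^2/2 + v^3/6 := by
      simp [Finset.sum_range_succ, Nat.factorial]
      try ring
    rw [e] at h; exact h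
  have hx : (0:ℝ) < 1 - v^2/4 := by nlinarith
  have h3 : 1 - v^2/4 ≤ (Real.exp (v^2/4))⁻¹ := by
    have := Real.add_one_le_exp (-(v^2/4))
    rw [Real.exp_neg] at this; linarith
  have hev : (0:ℝ) < Real.exp (v^2/4) := Real.exp_pos _
  have key : (1 + v + v^2/2 + v^3/6) * (1 - v^2/4) ≥ 1 + v := by
    have a3 : v^3 ≤ v^2 := by nlinarith
    have a4 : v^4 ≤ v^2 := by nlinarith
    have a5 : v^5 ≤ v^2 := by nlinarith
    nlinarith
  have hre : Real.exp (v - v^2/4) = Real.exp v * (Real.exp (v^2/4))⁻¹ := by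
    rw [← Real.exp_neg, ← Real.exp_add]; ring_nf
  rw [hre]
  calc (1:ℝ) + v ≤ (1 + v + v^2/2 + v^3/6) * (1 - v^2/4) := key
    _ ≤ Real.exp v * (Real.exp (v^2/4))⁻¹ :=
        mul_le_mul hcub h3 (le_of_lt hx) (le_of_lt (Real.exp_pos v))

private lemma core_pow_bound (t m : ℕ) (hm : m ≤ t) (ht : 1 ≤ t) (v : ℝ)
    (h0 : 0 ≤ v) (h1 : v ≤ 1) :
    (1 + v) ^ (t + m) * (1 - v) ^ (t - m) ≤ Real.exp (2 * (m:ℝ)^2 / t) := by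
  have htp : (0:ℝ) < t := by exact_mod_cast ht
  rcases eq_or_lt_of_le h1 with rfl | hlt
  · -- v = 1
    rcases eq_or_lt_of_le hm with heq | hmt
    · subst heq
      simp only [Nat.sub_self, pow_zero, mul_one]
      have h2m : 2*(m:ℝ)^2/m = 2*m := by field_simp
      rw [h2m]
      have : ((1:ℝ)+1)^(m+m) ≤ Real.exp 1 ^ (m+m) := by
        apply pow_le_pow_left₀ (by norm_num)
        have := Real.add_one_le_exp 1; linarith
      calc ((1:ℝ)+1)^(m+m) ≤ Real.exp 1 ^ (m+m) := this
        _ = Real.exp (m+m) := by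
            rw [← Real.exp_nat_mul]; norm_num
        _ = Real.exp (2*m) := by norm_num; ring_nf
    · have hz : (1:ℝ) - 1 = 0 := by ring
      rw [hz, zero_pow (by omega), mul_zero]
      positivity
  · -- v < 1
    have h1v : (0:ℝ) < 1 - v := by linarith
    have h1p : (0:ℝ) < 1 + v := by linarith
    have hLHSpos : 0 < (1 + v) ^ (t + m) * (1 - v) ^ (t - m) := by positivity
    rw [← Real.exp_log hLHSpos, Real.exp_le_exp, Real.log_mul (by positivity) (by positivity),
      Real.log_pow, Real.log_pow]
    -- (t+m) log(1+v) + (t-m) log(1-v) ≤ 2 m^2/t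
    -- = (t-m)(log(1-v^2)) + 2m log(1+v)
    have hsplit : ((t+m : ℕ):ℝ) * Real.log (1+v) + ((t-m : ℕ):ℝ) * Real.log (1-v)
        = ((t-m:ℕ):ℝ) * Real.log ((1+v)*(1-v)) + (2*m) * Real.log (1+v) := by
      rw [Real.log_mul (ne_of_gt h1p) (ne_of_gt h1v)]
      have : ((t+m : ℕ):ℝ) = ((t-m:ℕ):ℝ) + 2*m := by
        push_cast [Nat.cast_sub hm]; ring
      rw [this]; ring
    rw [hsplit]
    have hlog1 : Real.log ((1+v)*(1-v)) ≤ -v^2 := by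
      have h := Real.log_le_sub_one_of_pos (mul_pos h1p h1v)
      nlinarith
    have hlog2 := log_one_add_le v h0 (le_of_lt hlt)
    have htm : ((t-m:ℕ):ℝ) = (t:ℝ) - m := by push_cast [Nat.cast_sub hm]; ring
    rw [htm]
    have hmr : (0:ℝ) ≤ m := Nat.cast_nonneg m
    have hmt : (m:ℝ) ≤ t := by exact_mod_cast hm
    -- final quadratic step
    have step1 : ((t:ℝ) - m) * Real.log ((1+v)*(1-v)) + (2*m) * Real.log (1+v)
        ≤ ((t:ℝ) - m) * (-v^2) + 2*m*(v - v^2/4) := by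
      have := mul_le_mul_of_nonneg_left hlog1 (by linarith : (0:ℝ) ≤ (t:ℝ) - m)
      have := mul_le_mul_of_nonneg_left hlog2 (by linarith : (0:ℝ) ≤ 2*(m:ℝ))
      linarith
    refine step1.trans ?_
    -- 2mv - (t - m/2) v^2 ≤ 2 m^2/t  given m ≤ t, t > 0
    rw [le_div_iff₀ htp]
    nlinarith [sq_nonneg ((t:ℝ)*v - 2*m), mul_nonneg (mul_nonneg htp.le (sub_nonneg.2 hmt)) (sq_nonneg v)]

private lemma xy_bound (t m : ℕ) (hm : m ≤ t) (ht : 1 ≤ t) {X Y a : ℝ}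
    (hX : 0 ≤ X) (hXY : X ≤ Y) (ha : X + Y = 2*a) (hapos : 0 < a) :
    (X*Y)^(t-m) * ((X^m + Y^m)/2)^2 ≤ a^(2*t) * Real.exp (2*(m:ℝ)^2/t) := by
  have hY : 0 ≤ Y := le_trans hX hXY
  set v : ℝ := (Y - X)/(2*a) with hv
  have hv0 : 0 ≤ v := div_nonneg (by linarith) (by linarith)
  have hv1 : v ≤ 1 := by
    rw [div_le_one (by positivity)]; linarith
  have hav : a * ((Y - X)/(2*a)) = (Y-X)/2 := by
    rw [mul_div_assoc', mul_comm a (Y-X), mul_comm 2 a, ← div_div, mul_div_cancel_right₀ _ hapos.ne']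
  have hXa : X = a*(1-v) := by rw [hv, mul_sub, mul_one, hav]; linarith
  have hYa : Y = a*(1+v) := by rw [hv, mul_add, mul_one, hav]; linarith
  have step1 : (X*Y)^(t-m) * ((X^m + Y^m)/2)^2 ≤ X^(t-m) * Y^(t+m) := by
    have h1 : (X^m + Y^m)/2 ≤ Y^m := by
      have := pow_le_pow_left₀ hX hXY m; linarith
    have h2 : ((X^m + Y^m)/2)^2 ≤ (Y^m)^2 := by
      apply pow_le_pow_left₀ (by positivity) h1
    calc (X*Y)^(t-m) * ((X^m + Y^m)/2)^2 ≤ (X*Y)^(t-m) * (Y^m)^2 := by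
          apply mul_le_mul_of_nonneg_left h2 (by positivity)
      _ = X^(t-m) * Y^(t+m) := by
          have haa : Y^(t-m) * Y^(m*2) = Y^(t+m) := by
            rw [← pow_add]; congr 1; omega
          rw [mul_pow, ← pow_mul, show X^(t-m)*Y^(t-m)*Y^(m*2) = X^(t-m)*(Y^(t-m)*Y^(m*2)) from by ring, haa]
  refine step1.trans ?_
  have : X^(t-m) * Y^(t+m) = a^(2*t) * ((1+v)^(t+m) * (1-v)^(t-m)) := by
    have haa : a^(t-m) * a^(t+m) = a^(2*t) := by rw [← pow_add]; congr 1; omega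
    rw [hXa, hYa, mul_pow, mul_pow,
      show a^(t-m)*(1-v)^(t-m)*(a^(t+m)*(1+v)^(t+m))
        = (a^(t-m)*a^(t+m))*((1+v)^(t+m)*(1-v)^(t-m)) from by ring, haa]
  rw [this]
  exact mul_le_mul_of_nonneg_left (core_pow_bound t m hm ht v hv0 hv1) (by positivity)

private lemma discrete_parseval (N : ℕ) (hN : N ≠ 0) {ζ : ℂ} (hζ : IsPrimitiveRoot ζ N)
    (hc : (starRingEnd ℂ) ζ = ζ⁻¹) (x : ℕ → ℝ) :
    ∑ k ∈ range N, Complex.normSq (∑ j ∈ range N, (x j : ℂ) * (ζ ^ k) ^ j)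
      = N * ∑ j ∈ range N, (x j)^2 := by
  have hζ0 : ζ ≠ 0 := by
    intro h
    have := hζ.pow_eq_one
    simp [h, zero_pow hN] at this
  have hζN : ζ ^ N = 1 := hζ.pow_eq_one
  -- orthogonality
  have orth : ∀ j ∈ range N, ∀ j' ∈ range N,
      ∑ k ∈ range N, (ζ ^ j * (ζ ^ j')⁻¹) ^ k = if j = j' then (N:ℂ) else 0 := by
    intro j hj j' hj'
    rcases eq_or_ne j j' with rfl | hne
    · simp [mul_inv_cancel₀ (pow_ne_zero j hζ0)]
    · rw [if_neg hne]
      have hu1 : ζ ^ j * (ζ ^ j')⁻¹ ≠ 1 := by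
        intro h
        apply hne
        have : ζ ^ j = ζ ^ j' := by
          field_simp at h; exact h
        exact hζ.pow_inj (mem_range.mp hj) (mem_range.mp hj') this
      have huN : (ζ ^ j * (ζ ^ j')⁻¹) ^ N = 1 := by
        rw [mul_pow, inv_pow, ← pow_mul, ← pow_mul, mul_comm j N, mul_comm j' N,
          pow_mul, pow_mul, hζN, one_pow, one_pow, inv_one, mul_one]
      rw [geom_sum_eq hu1, huN, sub_self, zero_div]
  -- main computation in ℂ
  have main : ∑ k ∈ range N, ((∑ j ∈ range N, (x j : ℂ) * (ζ ^ k) ^ j) *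
      (starRingEnd ℂ) (∑ j ∈ range N, (x j : ℂ) * (ζ ^ k) ^ j))
      = (N : ℂ) * ∑ j ∈ range N, ((x j : ℂ))^2 := by
    have conj_expand : ∀ k, (starRingEnd ℂ) (∑ j ∈ range N, (x j : ℂ) * (ζ ^ k) ^ j)
        = ∑ j ∈ range N, (x j : ℂ) * ((ζ ^ j)⁻¹) ^ k := by
      intro k
      rw [map_sum]
      apply Finset.sum_congr rfl
      intro j _
      rw [map_mul, Complex.conj_ofReal, map_pow, map_pow, hc]
      congr 1
      rw [← inv_pow, pow_right_comm]
  -- rewrite lhs sum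
    calc ∑ k ∈ range N, ((∑ j ∈ range N, (x j : ℂ) * (ζ ^ k) ^ j) *
          (starRingEnd ℂ) (∑ j ∈ range N, (x j : ℂ) * (ζ ^ k) ^ j))
        = ∑ k ∈ range N, ∑ j ∈ range N, ∑ j' ∈ range N,
            ((x j : ℂ) * (x j' : ℂ)) * ((ζ ^ j * (ζ ^ j')⁻¹) ^ k) := by
          apply Finset.sum_congr rfl
          intro k _
          rw [conj_expand k, Finset.sum_mul_sum]
          apply Finset.sum_congr rfl; intro j _
          apply Finset.sum_congr rfl; intro j' _
          rw [mul_pow]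
          have e1 : ((ζ ^ k) ^ j : ℂ) = (ζ ^ j) ^ k := by
            rw [← pow_mul, ← pow_mul, mul_comm]
          rw [e1]
          ring
      _ = ∑ j ∈ range N, ∑ j' ∈ range N,
            ((x j : ℂ) * (x j' : ℂ)) * ∑ k ∈ range N, ((ζ ^ j * (ζ ^ j')⁻¹) ^ k) := by
          rw [Finset.sum_comm]
          apply Finset.sum_congr rfl; intro j _
          rw [Finset.sum_comm]
          apply Finset.sum_congr rfl; intro j' _
          rw [Finset.mul_sum]
      _ = ∑ j ∈ range N, ((x j : ℂ) * (x j : ℂ)) * N := by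
          apply Finset.sum_congr rfl; intro j hj
          rw [Finset.sum_eq_single j]
          · rw [orth j hj j hj, if_pos rfl]
          · intro j' hj' hne
            rw [orth j hj j' hj', if_neg (Ne.symm hne), mul_zero]
          · intro h; exact absurd hj h
      _ = (N:ℂ) * ∑ j ∈ range N, ((x j : ℂ))^2 := by
          rw [Finset.mul_sum]
          apply Finset.sum_congr rfl; intro j _
          rw [sq]; ring
  -- descend to ℝ
  have cast_eq : ((∑ k ∈ range N, Complex.normSq (∑ j ∈ range N, (x j : ℂ) * (ζ ^ k) ^ j) : ℝ) : ℂ)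
      = ((N * ∑ j ∈ range N, (x j)^2 : ℝ) : ℂ) := by
    push_cast
    rw [← main]
    apply Finset.sum_congr rfl
    intro k _
    rw [← Complex.mul_conj]
  exact_mod_cast cast_eq

private lemma cheb_poly_factor (t m : ℕ) (hm : m ≤ t) (z : ℂ) :
    ∑ j ∈ range (t+1), (∑ l ∈ range (j+1),
        (-1:ℂ)^l * (((2*m).choose (2*l)) : ℂ) * (((t-m).choose (j-l)) : ℂ)) * z^j
    = (∑ l ∈ range (m+1), (-1:ℂ)^l * (((2*m).choose (2*l)) : ℂ) * z^l) * (1+z)^(t-m) := by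
  set a : ℕ → ℂ := fun l => (-1:ℂ)^l * (((2*m).choose (2*l)) : ℂ) with ha
  set c : ℕ → ℂ := fun i => (((t-m).choose i) : ℂ) with hc
  have hvan : ∀ l i : ℕ, t < l + i → a l * c i = 0 := by
    intro l i hli
    rcases le_or_gt l m with hlm | hlm
    · have : t - m < i := by omega
      simp [hc, Nat.choose_eq_zero_of_lt this]
    · have : 2*m < 2*l := by omega
      simp [ha, Nat.choose_eq_zero_of_lt this]
  have hbin : (1+z)^(t-m) = ∑ i ∈ range (t+1), c i * z^i := by
    rw [add_comm, add_pow]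
    have h1 : ∑ i ∈ range (t-m+1), z^i * 1^(t-m-i) * ((t-m).choose i : ℂ)
        = ∑ i ∈ range (t-m+1), c i * z^i := by
      apply Finset.sum_congr rfl; intro i _; rw [one_pow, hc]; ring
    rw [h1]
    apply Finset.sum_subset (by rw [Finset.range_subset_range]; omega)
    intro i _ hi
    have hti : t - m < i := by
      by_contra h; exact hi (mem_range.mpr (by omega))
    simp [hc, Nat.choose_eq_zero_of_lt hti]
  have haext : (∑ l ∈ range (m+1), a l * z^l) = ∑ l ∈ range (t+1), a l * z^l := by
    apply Finset.sum_subset (by rw [Finset.range_subset_range]; omega)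
    intro l _ hl
    have hml : 2*m < 2*l := by
      by_contra h; exact hl (mem_range.mpr (by omega))
    simp [ha, Nat.choose_eq_zero_of_lt hml]
  have lhs_eq : ∑ j ∈ range (t+1), (∑ l ∈ range (j+1), a l * c (j-l)) * z^j
      = ∑ l ∈ range (t+1), ∑ i ∈ range (t+1-l), (a l * z^l) * (c i * z^i) := by
    rw [← Finset.sum_range_diag_flip (t+1) (fun l i => (a l * z^l) * (c i * z^i))]
    apply Finset.sum_congr rfl
    intro j _
    rw [Finset.sum_mul]
    apply Finset.sum_congr rfl
    intro l hl
    have hlj : l ≤ j := Nat.lt_succ_iff.mp (mem_range.mp hl)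
    have hz : z^j = z^l * z^(j-l) := by
      rw [← pow_add]; congr 1; omega
    rw [hz]; ring
  have rhs_eq : ∑ l ∈ range (t+1), ∑ i ∈ range (t+1-l), (a l * z^l) * (c i * z^i)
      = (∑ l ∈ range (t+1), a l * z^l) * (∑ i ∈ range (t+1), c i * z^i) := by
    rw [Finset.sum_mul_sum]
    apply Finset.sum_congr rfl
    intro l _
    apply Finset.sum_subset (by rw [Finset.range_subset_range]; omega)
    intro i _ hi
    have hti : t < l + i := by
      by_contra h; exact hi (mem_range.mpr (by omega))
    have := hvan l i hti
    calc (a l * z^l) * (c i * z^i) = (a l * c i) * (z^l * z^i) := by ring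
      _ = 0 := by rw [this, zero_mul]
  calc ∑ j ∈ range (t+1), (∑ l ∈ range (j+1), a l * c (j-l)) * z^j
      = (∑ l ∈ range (t+1), a l * z^l) * (∑ i ∈ range (t+1), c i * z^i) := by
        rw [lhs_eq, rhs_eq]
    _ = (∑ l ∈ range (m+1), a l * z^l) * (1+z)^(t-m) := by rw [haext, hbin]

private lemma sum_range_even_split (f : ℕ → ℂ) (m : ℕ) :
    ∑ k ∈ range (2*m+1), f k
      = ∑ l ∈ range (m+1), f (2*l) + ∑ l ∈ range m, f (2*l+1) := by
  induction m with
  | zero => simp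
  | succ n ih =>
    have e : 2*(n+1)+1 = (2*n+1)+1+1 := by ring
    rw [e, Finset.sum_range_succ, Finset.sum_range_succ, ih,
      Finset.sum_range_succ (fun l => f (2*l)) (n+1),
      Finset.sum_range_succ (fun l => f (2*l+1)) n]
    have e1 : 2*(n+1) = 2*n+1+1 := by ring
    have e2 : 2*n+1 = 2*n+1 := rfl
    rw [e1]
    ring

private lemma cheb_G (m : ℕ) (w : ℂ) :
    ∑ l ∈ range (m+1), (-1:ℂ)^l * (((2*m).choose (2*l)) : ℂ) * (w^2)^l
      = ((1+Complex.I*w)^(2*m) + (1-Complex.I*w)^(2*m))/2 := by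
  have key : (1+Complex.I*w)^(2*m) + (1-Complex.I*w)^(2*m)
      = ∑ k ∈ range (2*m+1), ((Complex.I*w)^k + (-(Complex.I*w))^k) * (((2*m).choose k) : ℂ) := by
    rw [show (1 + Complex.I*w) = (Complex.I*w+1) by ring,
        show (1 - Complex.I*w) = (-(Complex.I*w)+1) by ring, add_pow, add_pow,
        ← Finset.sum_add_distrib]
    apply Finset.sum_congr rfl; intro k _
    ring
  rw [key, sum_range_even_split (fun k => ((Complex.I*w)^k + (-(Complex.I*w))^k) * (((2*m).choose k) : ℂ)) m]
  have hodd : ∑ l ∈ range m, ((Complex.I*w)^(2*l+1) + (-(Complex.I*w))^(2*l+1)) * (((2*m).choose (2*l+1)) : ℂ) = 0 := by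
    apply Finset.sum_eq_zero; intro l _
    rw [Odd.neg_pow ⟨l, by ring⟩]
    ring
  have heven : ∀ l ∈ range (m+1), ((Complex.I*w)^(2*l) + (-(Complex.I*w))^(2*l)) * (((2*m).choose (2*l)) : ℂ)
      = 2 * ((-1:ℂ)^l * (((2*m).choose (2*l)) : ℂ) * (w^2)^l) := by
    intro l _
    rw [Even.neg_pow ⟨l, by ring⟩]
    have : (Complex.I*w)^(2*l) = (-1:ℂ)^l * (w^2)^l := by
      rw [mul_pow, pow_mul, pow_mul, Complex.I_sq]
    rw [this]; ring
  rw [Finset.sum_congr rfl heven, hodd, add_zero, ← Finset.mul_sum]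
  field_simp

private noncomputable def chebNum (t m j : ℕ) : ℝ :=
  ∑ l ∈ Finset.range (j + 1), (-1:ℝ)^l * (((2*m).choose (2*l)) : ℝ) * (((t-m).choose (j-l)) : ℝ)

private lemma chebNum_complex (t m j : ℕ) : ((chebNum t m j : ℝ) : ℂ)
    = ∑ l ∈ range (j+1), (-1:ℂ)^l * (((2*m).choose (2*l)) : ℂ) * (((t-m).choose (j-l)) : ℂ) := by
  unfold chebNum
  push_cast
  rfl

private lemma circle_bound (t m : ℕ) (hm : m ≤ t) (ht : 1 ≤ t) (R θ : ℝ) :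
    Complex.normSq (∑ j ∈ range (t+1),
        ((chebNum t m j : ℝ):ℂ) * ((((R:ℂ)) * Complex.exp ((θ:ℂ) * Complex.I))^2)^j)
      ≤ (1+R^2)^(2*t) * Real.exp (2*(m:ℝ)^2/t) := by
  set w : ℂ := (R:ℂ) * Complex.exp ((θ:ℂ) * Complex.I) with hw
  have hfac : (∑ j ∈ range (t+1), ((chebNum t m j : ℝ):ℂ) * (w^2)^j)
      = (((1+Complex.I*w)^(2*m) + (1-Complex.I*w)^(2*m))/2) * (1+w^2)^(t-m) := by
    have e1 : ∀ j ∈ range (t+1), ((chebNum t m j : ℝ):ℂ) * (w^2)^j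
        = (∑ l ∈ range (j+1), (-1:ℂ)^l * (((2*m).choose (2*l)) : ℂ) * (((t-m).choose (j-l)) : ℂ)) * (w^2)^j := by
      intro j _; rw [chebNum_complex]
    rw [Finset.sum_congr rfl e1, cheb_poly_factor t m hm (w^2), cheb_G]
  set X := Complex.normSq (1+Complex.I*w) with hX
  set Y := Complex.normSq (1-Complex.I*w) with hY
  have hXn : 0 ≤ X := Complex.normSq_nonneg _
  have hYn : 0 ≤ Y := Complex.normSq_nonneg _
  have hw2 : Complex.normSq w = R^2 := by
    rw [hw, Complex.normSq_mul, ← Complex.sq_norm (Complex.exp _), Complex.norm_exp_ofReal_mul_I]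
    simp [Complex.normSq_ofReal]
    ring
  have hsum : X + Y = 2*(1+R^2) := by
    rw [hX, hY, ← hw2]
    simp [Complex.normSq_apply, Complex.add_re, Complex.add_im, Complex.mul_re, Complex.mul_im,
      Complex.I_re, Complex.I_im, Complex.sub_re, Complex.sub_im, Complex.one_re, Complex.one_im]
    ring
  have h1w : (1+w^2) = (1+Complex.I*w)*(1-Complex.I*w) := by
    have := Complex.I_sq
    linear_combination (w^2) * this
  -- normSq bound
  have habs : Complex.normSq (∑ j ∈ range (t+1), ((chebNum t m j : ℝ):ℂ) * (w^2)^j)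
      ≤ (X*Y)^(t-m) * ((X^m + Y^m)/2)^2 := by
    rw [hfac, Complex.normSq_mul, map_pow, h1w, Complex.normSq_mul, mul_comm]
    rw [← hX, ← hY]
    apply mul_le_mul_of_nonneg_left _ (by positivity)
    rw [← Complex.sq_norm]
    apply pow_le_pow_left₀ (norm_nonneg _)
    rw [norm_div]
    have h2 : ‖(2:ℂ)‖ = 2 := by norm_num
    rw [h2]
    have htri : ‖(1+Complex.I*w)^(2*m) + (1-Complex.I*w)^(2*m)‖
        ≤ X^m + Y^m := by
      refine (norm_add_le _ _).trans ?_
      rw [norm_pow, norm_pow]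
      have e1 : ‖1+Complex.I*w‖ ^ (2*m) = X^m := by
        rw [pow_mul, Complex.sq_norm, hX]
      have e2 : ‖1-Complex.I*w‖ ^ (2*m) = Y^m := by
        rw [pow_mul, Complex.sq_norm, hY]
      rw [e1, e2]
    linarith
  have hfin := habs
  rcases le_total X Y with hXY | hYX
  · exact hfin.trans (xy_bound t m hm ht hXn hXY hsum (by positivity))
  · have hsum' : Y + X = 2*(1+R^2) := by linarith
    have := xy_bound t m hm ht hYn hYX hsum' (by positivity)
    have e : (Y*X)^(t-m) * ((Y^m + X^m)/2)^2 = (X*Y)^(t-m) * ((X^m + Y^m)/2)^2 := by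
      ring
    rw [e] at this
    exact hfin.trans this



private lemma sum_sq_rho (t m : ℕ) (hm : m ≤ t) (ht : 1 ≤ t) (ρ : ℝ) (hρ : 0 ≤ ρ) :
    ∑ j ∈ range (t+1), (chebNum t m j)^2 * ρ^(2*j)
      ≤ (1+ρ)^(2*t) * Real.exp (2*(m:ℝ)^2/t) := by
  set N := t+1 with hN
  have hN0 : (N:ℕ) ≠ 0 := by omega
  set ζ : ℂ := Complex.exp (2*Real.pi*Complex.I/N) with hζdef
  have hζ : IsPrimitiveRoot ζ N := Complex.isPrimitiveRoot_exp N hN0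
  have hconj : (starRingEnd ℂ) ζ = ζ⁻¹ := by
    rw [hζdef, ← Complex.exp_conj, ← Complex.exp_neg]
    congr 1
    simp [map_div₀, Complex.conj_I, map_ofNat]
    ring
  have key := discrete_parseval N hN0 hζ hconj (fun j => chebNum t m j * ρ^j)
  -- identify the evaluation points with squares
  have hpoint : ∀ k j : ℕ, ((chebNum t m j * ρ^j : ℝ) : ℂ) * (ζ^k)^j
      = ((chebNum t m j : ℝ):ℂ) * ((((Real.sqrt ρ : ℝ):ℂ) * Complex.exp (((Real.pi * k / N : ℝ):ℂ) * Complex.I))^2)^j := by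
    intro k j
    have hsq : ((((Real.sqrt ρ : ℝ):ℂ)) * Complex.exp (((Real.pi * k / N : ℝ):ℂ) * Complex.I))^2
        = (ρ:ℂ) * ζ^k := by
      rw [mul_pow, ← Complex.ofReal_pow, Real.sq_sqrt hρ]
      congr 1
      rw [sq, ← Complex.exp_add, hζdef, ← Complex.exp_nat_mul]
      congr 1
      push_cast
      ring
    rw [hsq, mul_pow]
    push_cast
    ring
  have lhs_eq : ∑ k ∈ range N, Complex.normSq (∑ j ∈ range N, ((chebNum t m j * ρ^j : ℝ) : ℂ) * (ζ^k)^j)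
      = ∑ k ∈ range N, Complex.normSq (∑ j ∈ range N,
          ((chebNum t m j : ℝ):ℂ) * ((((Real.sqrt ρ : ℝ):ℂ) * Complex.exp (((Real.pi * k / N : ℝ):ℂ) * Complex.I))^2)^j) := by
    apply Finset.sum_congr rfl; intro k _
    congr 1
    exact Finset.sum_congr rfl (fun j _ => hpoint k j)
  have bound : ∑ k ∈ range N, Complex.normSq (∑ j ∈ range N, ((chebNum t m j * ρ^j : ℝ) : ℂ) * (ζ^k)^j)
      ≤ N * ((1+ρ)^(2*t) * Real.exp (2*(m:ℝ)^2/t)) := by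
    rw [lhs_eq]
    calc _ ≤ ∑ k ∈ range N, (1+(Real.sqrt ρ)^2)^(2*t) * Real.exp (2*(m:ℝ)^2/t) := by
          apply Finset.sum_le_sum
          intro k _
          exact circle_bound t m hm ht (Real.sqrt ρ) (Real.pi * k / N)
      _ = N * ((1+ρ)^(2*t) * Real.exp (2*(m:ℝ)^2/t)) := by
          rw [Finset.sum_const, card_range, Real.sq_sqrt hρ, nsmul_eq_mul]
  have rhs_eq : (N:ℝ) * ∑ j ∈ range N, (chebNum t m j * ρ^j)^2
      = (N:ℝ) * ∑ j ∈ range N, (chebNum t m j)^2 * ρ^(2*j) := by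
    congr 1
    apply Finset.sum_congr rfl; intro j _
    rw [mul_pow, ← pow_mul, mul_comm j 2]
  rw [key, rhs_eq] at bound
  have hNpos : (0:ℝ) < N := by positivity
  exact le_of_mul_le_mul_left bound hNpos

private lemma beta_int : ∀ (k j : ℕ),
    ∫ x in (0:ℝ)..1, x^j * (1-x)^k
      = (j.factorial * k.factorial : ℝ) / (j+k+1).factorial := by
  intro k
  induction k with
  | zero =>
    intro j
    simp only [pow_zero, mul_one, integral_pow]
    rw [Nat.add_zero, Nat.factorial_succ]
    push_cast
    field_simp
    simp
  | succ n ih =>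
    intro j
    have hint : ∀ a b : ℕ, IntervalIntegrable (fun x : ℝ => x^a * (1-x)^b) MeasureTheory.volume 0 1 := by
      intro a b
      apply Continuous.intervalIntegrable
      continuity
    have split : ∫ x in (0:ℝ)..1, x^j*(1-x)^(n+1)
        = (∫ x in (0:ℝ)..1, x^j*(1-x)^n) - ∫ x in (0:ℝ)..1, x^(j+1)*(1-x)^n := by
      rw [← intervalIntegral.integral_sub (hint j n) (hint (j+1) n)]
      apply intervalIntegral.integral_congr
      intro x _
      simp only
      ring
    rw [split, ih j, ih (j+1)]
    have e1 : j+(n+1)+1 = (j+n+1)+1 := by omega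
    have e2 : (j+1)+n+1 = (j+n+1)+1 := by omega
    rw [e1, e2, Nat.factorial_succ (j+n+1), Nat.factorial_succ n, Nat.factorial_succ j]
    have h1 : ((j+n+1).factorial : ℝ) > 0 := by positivity
    have h2 : ((n).factorial : ℝ) > 0 := by positivity
    have h3 : ((j).factorial : ℝ) > 0 := by positivity
    field_simp
    push_cast
    ring





-- pointwise bound on the kernel
private lemma kernel_bound (t m : ℕ) (hm : m ≤ t) (ht : 1 ≤ t) (x y : ℝ)
    (hx : x ∈ Set.Icc (0:ℝ) 1) (hy : y ∈ Set.Icc (0:ℝ) 1) :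
    ∑ j ∈ range (t+1), (chebNum t m j)^2 * ((x*y)^j * ((1-x)*(1-y))^(t-j))
      ≤ Real.exp (2*(m:ℝ)^2/t) := by
  obtain ⟨hx0, hx1⟩ := hx
  obtain ⟨hy0, hy1⟩ := hy
  have hE1 : (1:ℝ) ≤ Real.exp (2*(m:ℝ)^2/t) := by
    rw [Real.one_le_exp_iff]
    positivity
  set q : ℝ := (1-x)*(1-y) with hq
  have hq0 : 0 ≤ q := by
    apply mul_nonneg <;> linarith
  have hxy0 : 0 ≤ x*y := mul_nonneg hx0 hy0
  have hxy1 : x*y ≤ 1 := by nlinarith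
  rcases eq_or_lt_of_le hq0 with hq00 | hqpos
  · -- q = 0
    have hlast : chebNum t m t = (-1:ℝ)^m := by
      unfold chebNum
      rw [Finset.sum_eq_single m]
      · simp [Nat.sub_self]
      · intro l hl hne
        rcases lt_or_gt_of_ne hne with h | h
        · have : t - m < t - l := by omega
          simp [Nat.choose_eq_zero_of_lt this]
        · have : 2*m < 2*l := by omega
          simp [Nat.choose_eq_zero_of_lt this]
      · intro h
        exact absurd (mem_range.mpr (by omega)) h
    have : ∑ j ∈ range (t+1), (chebNum t m j)^2 * ((x*y)^j * q^(t-j))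
        = (chebNum t m t)^2 * (x*y)^t := by
      rw [Finset.sum_eq_single t]
      · rw [Nat.sub_self, pow_zero, mul_one]
      · intro j hj hne
        have hjt : j < t := by
          have := mem_range.mp hj; omega
        rw [← hq00, zero_pow (by omega), mul_zero, mul_zero]
      · intro h; exact absurd (mem_range.mpr (by omega)) h
    rw [this, hlast]
    calc ((-1:ℝ)^m)^2 * (x*y)^t ≤ 1 := by
          rw [← pow_mul, mul_comm m 2, pow_mul, neg_one_sq, one_pow, one_mul]
          exact pow_le_one₀ hxy0 hxy1
      _ ≤ _ := hE1
  · -- q > 0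
    set ρ : ℝ := Real.sqrt (x*y/q) with hρdef
    have hρ0 : 0 ≤ ρ := Real.sqrt_nonneg _
    have hρsq : ρ^2 = x*y/q := Real.sq_sqrt (by positivity)
    have heq : ∑ j ∈ range (t+1), (chebNum t m j)^2 * ((x*y)^j * q^(t-j))
        = q^t * ∑ j ∈ range (t+1), (chebNum t m j)^2 * ρ^(2*j) := by
      rw [Finset.mul_sum]
      apply Finset.sum_congr rfl
      intro j hj
      have hjt : j ≤ t := by have := mem_range.mp hj; omega
      have : ρ^(2*j) = (x*y)^j / q^j := by
        rw [pow_mul, hρsq, div_pow]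
      rw [this]
      have hqj : q^j ≠ 0 := by positivity
      have hsplit : q^t = q^(t-j) * q^j := by
        rw [← pow_add]; congr 1; omega
      field_simp [hsplit]
      rw [hsplit]
      ring
    rw [heq]
    have hb := sum_sq_rho t m hm ht ρ hρ0
    calc q^t * ∑ j ∈ range (t+1), (chebNum t m j)^2 * ρ^(2*j)
        ≤ q^t * ((1+ρ)^(2*t) * Real.exp (2*(m:ℝ)^2/t)) := by
          apply mul_le_mul_of_nonneg_left hb (by positivity)
      _ = (Real.sqrt q * (1+ρ))^(2*t) * Real.exp (2*(m:ℝ)^2/t) := by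
          have hqq : (Real.sqrt q)^(2*t) = q^t := by
            rw [pow_mul, Real.sq_sqrt hq0]
          conv_rhs => rw [mul_pow, hqq]
          ring
      _ ≤ Real.exp (2*(m:ℝ)^2/t) := by
          have hsum1 : Real.sqrt q * (1+ρ) ≤ 1 := by
            have e1 : Real.sqrt q * ρ = Real.sqrt (x*y) := by
              rw [hρdef, ← Real.sqrt_mul hq0, mul_div_cancel₀ _ (ne_of_gt hqpos)]
            have e2 : Real.sqrt (x*y) ≤ (x+y)/2 := by
              have h' : x*y ≤ ((x+y)/2)^2 := by nlinarith [sq_nonneg (x-y)]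
              have : Real.sqrt (x*y) ≤ Real.sqrt (((x+y)/2)^2) := Real.sqrt_le_sqrt h'
              rwa [Real.sqrt_sq (by linarith)] at this
            have e3 : Real.sqrt q ≤ ((1-x)+(1-y))/2 := by
              have h' : q ≤ (((1-x)+(1-y))/2)^2 := by rw [hq]; nlinarith [sq_nonneg (x-y)]
              have : Real.sqrt q ≤ Real.sqrt ((((1-x)+(1-y))/2)^2) := Real.sqrt_le_sqrt h'
              rwa [Real.sqrt_sq (by linarith)] at this
            have expand : Real.sqrt q * (1+ρ) = Real.sqrt q + Real.sqrt q * ρ := by ring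
            rw [expand, e1]
            linarith
          have h1 : (Real.sqrt q * (1+ρ))^(2*t) ≤ 1 := by
            apply pow_le_one₀ (by positivity) hsum1
          nlinarith [Real.exp_pos (2*(m:ℝ)^2/t)]

/-- The coefficient of the `j`-th Bernstein basis polynomial of degree `t` in the expansion of
the degree-`m` shifted Chebyshev polynomial. -/
noncomputable def chebCoeff (t m j : ℕ) : ℝ :=
  ∑ l ∈ Finset.range (j + 1),
    (-1 : ℝ) ^ (m + l) * ((2 * m).choose (2 * l) : ℝ) * ((t - m).choose (j - l) : ℝ)
      / (t.choose j : ℝ)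





theorem chebCoeff_l2_bound (t m : ℕ) (hm : m ≤ t) (ht : 1 ≤ t) :
    Real.sqrt (∑ j ∈ Finset.range (t + 1), (chebCoeff t m j) ^ 2)
        ≤ (t + 1) * Real.exp ((m : ℝ) ^ 2 / t) ∧
      ∀ j ≤ t, |chebCoeff t m j| ≤ (t + 1) * Real.exp ((m : ℝ) ^ 2 / t) := by
  have hE2 : ((↑t + 1) * Real.exp ((m:ℝ)^2/t))^2 = ((t:ℝ)+1)^2 * Real.exp (2*(m:ℝ)^2/t) := by
    rw [mul_pow]
    congr 1
    rw [sq, ← Real.exp_add]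
    congr 1
    ring
  set E : ℝ := Real.exp (2*(m:ℝ)^2/t) with hEdef
  set I : ℕ → ℝ := fun j => ∫ x in (0:ℝ)..1, x^j * (1-x)^(t-j) with hIdef
  have hIval : ∀ j, j ≤ t → (t.choose j : ℝ) * (((t:ℝ)+1) * I j) = 1 := by
    intro j hj
    have : I j = (j.factorial * (t-j).factorial : ℝ) / (j+(t-j)+1).factorial := by
      rw [hIdef]; exact beta_int (t-j) j
    rw [this]
    have he : j + (t-j) + 1 = t+1 := by omega
    rw [he, Nat.factorial_succ]
    have hcf : ((t.choose j : ℕ) : ℝ) * (j.factorial : ℝ) * ((t-j).factorial : ℝ) = (t.factorial : ℝ) := by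
      exact_mod_cast congrArg (Nat.cast (R := ℝ)) (Nat.choose_mul_factorial_mul_factorial hj)
    have hf1 : ((t.factorial : ℕ) : ℝ) > 0 := by exact_mod_cast t.factorial_pos
    have ht1 : ((t:ℝ)+1) > 0 := by positivity
    field_simp
    push_cast
    linear_combination ((t:ℝ)+1) * hcf
  have hC : ∀ j, j ≤ t → ((t.choose j : ℕ) : ℝ) ≠ 0 := by
    intro j hj
    have := Nat.choose_pos hj
    positivity
  have hcc : ∀ j, chebCoeff t m j = ((-1:ℝ)^m * chebNum t m j) / (t.choose j : ℝ) := by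
    intro j
    unfold chebCoeff chebNum
    rw [Finset.mul_sum, ← Finset.sum_div]
    congr 1
    apply Finset.sum_congr rfl
    intro l _
    rw [pow_add]
    ring
  have hsq : ∀ j, j ≤ t → (chebCoeff t m j)^2 = ((t:ℝ)+1)^2 * ((chebNum t m j)^2 * (I j)^2) := by
    intro j hj
    rw [hcc j]
    have h1 := hIval j hj
    have hm1 : ((-1:ℝ)^m)^2 = 1 := by
      rw [← pow_mul, mul_comm m 2, pow_mul, neg_one_sq, one_pow]
    have hCj := hC j hj
    rw [div_pow, mul_pow, hm1, one_mul]
    rw [div_eq_iff (by positivity)]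
    calc (chebNum t m j)^2
        = (chebNum t m j)^2 * ((t.choose j : ℝ) * (((t:ℝ)+1) * I j))^2 := by rw [h1]; ring
      _ = ((t:ℝ)+1)^2 * ((chebNum t m j)^2 * (I j)^2) * ((t.choose j:ℕ):ℝ)^2 := by ring
  have hS : ∑ j ∈ range (t+1), (chebCoeff t m j)^2
      = ((t:ℝ)+1)^2 * ∑ j ∈ range (t+1), (chebNum t m j)^2 * (I j)^2 := by
    rw [Finset.mul_sum]
    apply Finset.sum_congr rfl
    intro j hj
    exact hsq j (by have := mem_range.mp hj; omega)
  -- integral comparison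
  have hcont : ∀ (c : ℝ) (a b : ℕ), IntervalIntegrable (fun x : ℝ => c * (x^a * (1-x)^b))
      MeasureTheory.volume 0 1 := by
    intro c a b
    exact (continuous_const.mul ((continuous_pow a).mul
      ((continuous_const.sub continuous_id').pow b))).intervalIntegrable _ _
  have hcont2 : ∀ (yy : ℝ), IntervalIntegrable
      (fun x : ℝ => ∑ j ∈ range (t+1), (chebNum t m j)^2 * ((x*yy)^j * ((1-x)*(1-yy))^(t-j)))
      MeasureTheory.volume 0 1 := by
    intro yy
    apply Continuous.intervalIntegrable
    apply continuous_finset_sum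
    intro j _
    exact continuous_const.mul (((continuous_id'.mul continuous_const).pow j).mul
      (((continuous_const.sub continuous_id').mul continuous_const).pow (t-j)))
  set g : ℝ → ℝ := fun y => ∑ j ∈ range (t+1), (chebNum t m j)^2 * I j * (y^j * (1-y)^(t-j)) with hgdef
  have hg_eq : ∀ y : ℝ, g y = ∫ x in (0:ℝ)..1,
      ∑ j ∈ range (t+1), (chebNum t m j)^2 * ((x*y)^j * ((1-x)*(1-y))^(t-j)) := by
    intro y
    rw [hgdef]
    simp only
    rw [intervalIntegral.integral_finset_sum
      (f := fun j x => (chebNum t m j)^2 * ((x*y)^j * ((1-x)*(1-y))^(t-j))) (fun j _ =>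
      (continuous_const.mul (((continuous_id'.mul continuous_const).pow j).mul
        (((continuous_const.sub continuous_id').mul continuous_const).pow
          (t-j)))).intervalIntegrable _ _)]
    apply Finset.sum_congr rfl
    intro j _
    have e : (fun x : ℝ => (chebNum t m j)^2 * ((x*y)^j * ((1-x)*(1-y))^(t-j)))
        = fun x : ℝ => ((chebNum t m j)^2 * (y^j * (1-y)^(t-j))) * (x^j * (1-x)^(t-j)) := by
      funext x; rw [mul_pow, mul_pow]; ring
    rw [e, intervalIntegral.integral_const_mul]
    rw [hIdef]
    ring
  have hgle : ∀ y ∈ Set.Icc (0:ℝ) 1, g y ≤ E := by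
    intro y hy
    rw [hg_eq y]
    have hmono : ∫ x in (0:ℝ)..1,
        (∑ j ∈ range (t+1), (chebNum t m j)^2 * ((x*y)^j * ((1-x)*(1-y))^(t-j)))
        ≤ ∫ _x in (0:ℝ)..1, E := by
      exact intervalIntegral.integral_mono_on (by norm_num) (hcont2 y) intervalIntegrable_const
        (fun x hx => kernel_bound t m hm ht x y hx hy)
    calc _ ≤ ∫ _x in (0:ℝ)..1, E := hmono
      _ = E := by simp
  have houter : ∑ j ∈ range (t+1), (chebNum t m j)^2 * (I j)^2 = ∫ y in (0:ℝ)..1, g y := by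
    rw [hgdef]
    simp only
    rw [intervalIntegral.integral_finset_sum (fun j _ => hcont ((chebNum t m j)^2 * I j) j (t-j))]
    apply Finset.sum_congr rfl
    intro j _
    rw [intervalIntegral.integral_const_mul, hIdef]
    ring
  have hgint : IntervalIntegrable g MeasureTheory.volume 0 1 := by
    rw [hgdef]
    apply Continuous.intervalIntegrable
    apply continuous_finset_sum
    intro j _
    exact continuous_const.mul ((continuous_pow j).mul
      ((continuous_const.sub continuous_id').pow (t-j)))
  have hfinal : ∑ j ∈ range (t+1), (chebNum t m j)^2 * (I j)^2 ≤ E := by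
    rw [houter]
    calc ∫ y in (0:ℝ)..1, g y ≤ ∫ _y in (0:ℝ)..1, E := by
          apply intervalIntegral.integral_mono_on (by norm_num) hgint intervalIntegrable_const hgle
      _ = E := by simp
  have hSbound : ∑ j ∈ range (t+1), (chebCoeff t m j)^2 ≤ ((↑t + 1) * Real.exp ((m:ℝ)^2/t))^2 := by
    rw [hS, hE2]
    apply mul_le_mul_of_nonneg_left hfinal (by positivity)
  have hBpos : (0:ℝ) ≤ (↑t + 1) * Real.exp ((m:ℝ)^2/t) := by positivity
  constructor
  · calc Real.sqrt (∑ j ∈ range (t+1), (chebCoeff t m j)^2)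
        ≤ Real.sqrt (((↑t + 1) * Real.exp ((m:ℝ)^2/t))^2) := Real.sqrt_le_sqrt hSbound
      _ = (↑t + 1) * Real.exp ((m:ℝ)^2/t) := Real.sqrt_sq hBpos
  · intro j hj
    have hsingle : (chebCoeff t m j)^2 ≤ ∑ j ∈ range (t+1), (chebCoeff t m j)^2 :=
      Finset.single_le_sum (f := fun j => (chebCoeff t m j)^2) (fun i _ => sq_nonneg _)
        (mem_range.mpr (by omega))
    rw [← Real.sqrt_sq_eq_abs]
    calc Real.sqrt ((chebCoeff t m j)^2)
        ≤ Real.sqrt (((↑t + 1) * Real.exp ((m:ℝ)^2/t))^2) :=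
          Real.sqrt_le_sqrt (hsingle.trans hSbound)
      _ = (↑t + 1) * Real.exp ((m:ℝ)^2/t) := Real.sqrt_sq hBpos
end

section
/- For real numbers u ∈ [0,1] and θ, and natural numbers m ≤ t, let z = -cos(2θ) - i sin(2θ). Then (t-m)/2 · log((1 - u(1+cos 2θ))² + u² sin²(2θ)) + m · log((√(1-u) + √u cos θ)² + u sin²θ) ≤ m²/t. -/
set_option maxHeartbeats 1000000

open Real

theorem log_magnitude_integrand_bound (t m : ℕ) (hm : m ≤ t) (ht : 1 ≤ t)
    (u θ : ℝ) (hu : u ∈ Set.Icc (0:ℝ) 1)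
    (h1 : 0 < (1 - u * (1 + Real.cos (2 * θ))) ^ 2 + u ^ 2 * Real.sin (2 * θ) ^ 2)
    (h2 : 0 < (Real.sqrt (1 - u) + Real.sqrt u * Real.cos θ) ^ 2 + u * Real.sin θ ^ 2) :
    ((t : ℝ) - m) / 2 *
        Real.log ((1 - u * (1 + Real.cos (2 * θ))) ^ 2 + u ^ 2 * Real.sin (2 * θ) ^ 2) +
      (m : ℝ) *
        Real.log ((Real.sqrt (1 - u) + Real.sqrt u * Real.cos θ) ^ 2 + u * Real.sin θ ^ 2)
      ≤ (m : ℝ) ^ 2 / t := by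
  obtain ⟨hu0, hu1⟩ := hu
  have h1u : (0:ℝ) ≤ 1 - u := by linarith
  set c := Real.cos θ with hc
  set x := 2 * Real.sqrt (u * (1 - u)) * c with hxdef
  have e1 : Real.sqrt (1 - u) ^ 2 = 1 - u := Real.sq_sqrt h1u
  have e2 : Real.sqrt u ^ 2 = u := Real.sq_sqrt hu0
  have e3 : Real.sqrt (u * (1 - u)) = Real.sqrt u * Real.sqrt (1 - u) :=
    Real.sqrt_mul hu0 _
  have e4 : Real.sqrt (u * (1 - u)) ^ 2 = u * (1 - u) :=
    Real.sq_sqrt (by nlinarith)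
  have hs2 : Real.sin θ ^ 2 = 1 - c ^ 2 := Real.sin_sq θ
  have hB : (Real.sqrt (1 - u) + Real.sqrt u * c) ^ 2 + u * Real.sin θ ^ 2 = 1 + x := by
    rw [hs2, hxdef]
    linear_combination e1 + c ^ 2 * e2 - 2 * c * e3
  have hA : (1 - u * (1 + Real.cos (2 * θ))) ^ 2 + u ^ 2 * Real.sin (2 * θ) ^ 2
      = 1 - x ^ 2 := by
    rw [Real.cos_two_mul, Real.sin_two_mul, hxdef]
    linear_combination 4 * u ^ 2 * c ^ 2 * hs2 + 4 * c ^ 2 * e4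
  rw [hA, hB]
  rw [hA] at h1
  rw [hB] at h2
  have hx1 : (0:ℝ) < 1 + x := h2
  have hx3 : (0:ℝ) < 1 - x := by nlinarith
  have ht0 : (0:ℝ) < t := by exact_mod_cast Nat.pos_of_ne_zero (by omega)
  have hlogsplit : Real.log (1 - x ^ 2) = Real.log (1 + x) + Real.log (1 - x) := by
    rw [show (1:ℝ) - x ^ 2 = (1 + x) * (1 - x) by ring,
      Real.log_mul (ne_of_gt hx1) (ne_of_gt hx3)]
  rw [hlogsplit]
  set P := Real.log (1 + x) with hP
  set Q := Real.log (1 - x) with hQ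
  clear_value P Q
  clear_value x c
  clear hB hA hlogsplit hs2 e1 e2 e3 e4 h1 h2 hxdef hc
  rcases eq_or_lt_of_le hm with heq | hlt
  · subst heq
    have hP1 : P ≤ x := by
      have := Real.log_le_sub_one_of_pos hx1
      linarith
    have : ((m:ℝ)) ^ 2 / m = m := by field_simp
    rw [this]
    nlinarith
  · have hmt : (m:ℝ) < t := by exact_mod_cast hlt
    have htm1 : (0:ℝ) < (t:ℝ) + m := by positivity
    have htm2 : (0:ℝ) < (t:ℝ) - m := by linarith
    set r := (m:ℝ) / t with hr
    have hr1 : (0:ℝ) < 1 + r := by positivity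
    have hr2 : (0:ℝ) < 1 - r := by
      rw [hr, sub_pos, div_lt_one ht0]; exact hmt
    set a := Real.log (1 + r) with ha
    set b := Real.log (1 - r) with hb
    clear_value a b
    have F1 : ((t:ℝ) + m) * P ≤ ((t:ℝ) + m) * a + ((t:ℝ) * x - m) := by
      have hd : (0:ℝ) < (1 + x) / (1 + r) := by positivity
      have h := Real.log_le_sub_one_of_pos hd
      rw [Real.log_div (ne_of_gt hx1) (ne_of_gt hr1)] at h
      have key : (1 + x) / (1 + r) - 1 = ((t:ℝ) * x - m) / ((t:ℝ) + m) := by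
        rw [hr]; field_simp; ring
      rw [key] at h
      rw [← hP, ← ha] at h
      have h2' := h
      rw [le_div_iff₀ htm1] at h2'
      linarith [h2']
    have F2 : ((t:ℝ) - m) * Q ≤ ((t:ℝ) - m) * b + ((m:ℝ) - (t:ℝ) * x) := by
      have hd : (0:ℝ) < (1 - x) / (1 - r) := by positivity
      have h := Real.log_le_sub_one_of_pos hd
      rw [Real.log_div (ne_of_gt hx3) (ne_of_gt hr2)] at h
      have key : (1 - x) / (1 - r) - 1 = ((m:ℝ) - (t:ℝ) * x) / ((t:ℝ) - m) := by
        rw [hr]; field_simp; ring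
      rw [key] at h
      rw [← hQ, ← hb] at h
      have h2' := h
      rw [le_div_iff₀ htm2] at h2'
      linarith [h2']
    have F3 : (t:ℝ) * a ≤ m := by
      have h := Real.log_le_sub_one_of_pos hr1
      rw [← ha] at h
      have : a ≤ r := by linarith
      have := mul_le_mul_of_nonneg_left this (le_of_lt ht0)
      rw [hr] at this
      calc (t:ℝ) * a ≤ (t:ℝ) * ((m:ℝ)/t) := this
        _ = m := by field_simp
    have F4 : (t:ℝ) * b ≤ -m := by
      have h := Real.log_le_sub_one_of_pos hr2
      rw [← hb] at h
      have hb' : b ≤ -r := by linarith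
      have := mul_le_mul_of_nonneg_left hb' (le_of_lt ht0)
      rw [hr] at this
      calc (t:ℝ) * b ≤ (t:ℝ) * (-((m:ℝ)/t)) := this
        _ = -m := by field_simp
    rw [le_div_iff₀ ht0]
    have G1 : (t:ℝ)/2 * (((t:ℝ)+m)*P) ≤ (t:ℝ)/2 * (((t:ℝ)+m)*a + ((t:ℝ)*x - m)) :=
      mul_le_mul_of_nonneg_left F1 (by positivity)
    have G2 : (t:ℝ)/2 * (((t:ℝ)-m)*Q) ≤ (t:ℝ)/2 * (((t:ℝ)-m)*b + ((m:ℝ) - (t:ℝ)*x)) :=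
      mul_le_mul_of_nonneg_left F2 (by positivity)
    have G3 : ((t:ℝ)+m)/2 * ((t:ℝ)*a) ≤ ((t:ℝ)+m)/2 * m :=
      mul_le_mul_of_nonneg_left F3 (by positivity)
    have G4 : ((t:ℝ)-m)/2 * ((t:ℝ)*b) ≤ ((t:ℝ)-m)/2 * (-m) :=
      mul_le_mul_of_nonneg_left F4 (by linarith)
    linarith [G1, G2, G3, G4]
end

section
/- For natural numbers k ≤ t and z = cos θ + i sin θ on the unit circle, |(1+z)^{t-k}(1-z)^k| = 2^t |cos(θ/2)|^{t-k} |sin(θ/2)|^k, and this quantity is at most 2^t ((t-k)/t)^{(t-k)/2} (k/t)^{k/2} for all θ (with the conventions 0^0 = 1). -/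
open Real Complex

lemma key_geom (x y a b : ℝ) (hx : 0 ≤ x) (hy : 0 ≤ y) (hxy : x + y = 1)
    (ha : 0 ≤ a) (hb : 0 ≤ b) (hab : a + b = 1) :
    x ^ a * y ^ b ≤ a ^ a * b ^ b := by
  rcases eq_or_lt_of_le ha with rfl | ha'
  · have hb1 : b = 1 := by linarith
    subst hb1
    simp [Real.rpow_zero, Real.rpow_one]
    linarith
  rcases eq_or_lt_of_le hb with rfl | hb'
  · have ha1 : a = 1 := by linarith
    subst ha1
    simp [Real.rpow_zero, Real.rpow_one]
    linarith
  rcases eq_or_lt_of_le hx with rfl | hx'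
  · rw [Real.zero_rpow ha'.ne']
    have : 0 ≤ a ^ a * b ^ b := by positivity
    simpa using this
  rcases eq_or_lt_of_le hy with rfl | hy'
  · rw [Real.zero_rpow hb'.ne']
    have : 0 ≤ a ^ a * b ^ b := by positivity
    simpa using this
  have h2 : (x / a) ^ a * (y / b) ^ b ≤ 1 := by
    have h := Real.geom_mean_le_arith_mean2_weighted ha hb
      (div_nonneg hx ha) (div_nonneg hy hb) hab
    have heq : a * (x / a) + b * (y / b) = 1 := by
      field_simp
      linarith
    rw [heq] at h
    exact h
  rw [Real.div_rpow hx ha, Real.div_rpow hy hb, div_mul_div_comm,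
    div_le_one (by positivity)] at h2
  simpa using h2

theorem kravchuk_genfun_unit_circle_bound (k t : ℕ) (hk : k ≤ t) (θ : ℝ) :
    (‖(1 + (Complex.cos θ + Complex.sin θ * Complex.I)) ^ (t - k) *
          (1 - (Complex.cos θ + Complex.sin θ * Complex.I)) ^ k‖
        = 2 ^ t * |Real.cos (θ / 2)| ^ (t - k) * |Real.sin (θ / 2)| ^ k) ∧
      2 ^ t * |Real.cos (θ / 2)| ^ (t - k) * |Real.sin (θ / 2)| ^ k
        ≤ 2 ^ t * (((t : ℝ) - k) / t) ^ (((t : ℝ) - k) / 2) * ((k : ℝ) / t) ^ ((k : ℝ) / 2) := by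
  constructor
  · -- norm computation
    have hz : Complex.cos θ + Complex.sin θ * Complex.I = Complex.exp (θ * Complex.I) :=
      (Complex.exp_mul_I θ).symm
    have hw : Complex.exp ((θ / 2 : ℝ) * Complex.I) ≠ 0 := Complex.exp_ne_zero _
    have hsq : Complex.exp ((θ / 2 : ℝ) * Complex.I) * Complex.exp ((θ / 2 : ℝ) * Complex.I)
        = Complex.exp (θ * Complex.I) := by
      rw [← Complex.exp_add]
      congr 1
      push_cast
      ring
    have e1 : (1 : ℂ) + Complex.exp (θ * Complex.I)
        = 2 * Complex.cos (θ / 2 : ℝ) * Complex.exp ((θ / 2 : ℝ) * Complex.I) := by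
      rw [Complex.cos, ← hsq]
      simp only [neg_mul, Complex.exp_neg]
      push_cast
      field_simp
      ring
    have e2 : (1 : ℂ) - Complex.exp (θ * Complex.I)
        = -(2 * Complex.I * Complex.sin (θ / 2 : ℝ)) * Complex.exp ((θ / 2 : ℝ) * Complex.I) := by
      rw [Complex.sin, ← hsq]
      simp only [neg_mul, Complex.exp_neg]
      push_cast
      field_simp
      ring_nf
      rw [Complex.I_sq]
      ring
    have hc2 : ((θ : ℂ) / 2) = ((θ / 2 : ℝ) : ℂ) := by push_cast; ring
    have n1 : ‖2 * Complex.cos ((θ / 2 : ℝ) : ℂ) * Complex.exp (((θ / 2 : ℝ) : ℂ) * Complex.I)‖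
        = 2 * |Real.cos (θ / 2)| := by
      simp [map_mul, Complex.norm_exp, Complex.norm_real]
      rw [hc2, ← Complex.ofReal_cos, Complex.norm_real, Real.norm_eq_abs]
    have n2 : ‖-(2 * Complex.I * Complex.sin ((θ / 2 : ℝ) : ℂ)) *
          Complex.exp (((θ / 2 : ℝ) : ℂ) * Complex.I)‖ = 2 * |Real.sin (θ / 2)| := by
      simp [map_mul, Complex.norm_exp, Complex.norm_real]
      rw [hc2, ← Complex.ofReal_sin, Complex.norm_real, Real.norm_eq_abs]
    rw [hz, norm_mul, norm_pow, norm_pow, e1, e2, n1, n2]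
    rw [mul_pow, mul_pow, show (2 : ℝ) ^ t = 2 ^ (t - k) * 2 ^ k by
      rw [← pow_add, Nat.sub_add_cancel hk]]
    ring
  · -- the inequality
    rcases Nat.eq_zero_or_pos t with rfl | ht
    · interval_cases k
      simp
    have ht' : (0 : ℝ) < t := by exact_mod_cast ht
    set m : ℕ := t - k with hmdef
    have hmk : (m : ℝ) + k = t := by
      have : m + k = t := Nat.sub_add_cancel hk
      exact_mod_cast this
    have hcast : (t : ℝ) - k = m := by linarith
    set c := Real.cos (θ / 2)
    set s := Real.sin (θ / 2)
    have hpyth : c ^ 2 + s ^ 2 = 1 := by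
      have := Real.sin_sq_add_cos_sq (θ / 2)
      linarith
    have hab : (m : ℝ) / t + (k : ℝ) / t = 1 := by
      field_simp
      linarith
    have key := key_geom (c ^ 2) (s ^ 2) ((m : ℝ) / t) ((k : ℝ) / t)
      (sq_nonneg c) (sq_nonneg s) hpyth (by positivity) (by positivity) hab
    have key2 : ((c ^ 2) ^ ((m : ℝ) / t) * (s ^ 2) ^ ((k : ℝ) / t)) ^ ((t : ℝ) / 2)
        ≤ (((m : ℝ) / t) ^ ((m : ℝ) / t) * ((k : ℝ) / t) ^ ((k : ℝ) / t)) ^ ((t : ℝ) / 2) :=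
      Real.rpow_le_rpow (by positivity) key (by positivity)
    rw [Real.mul_rpow (by positivity) (by positivity),
        Real.mul_rpow (by positivity) (by positivity),
        ← Real.rpow_mul (sq_nonneg c), ← Real.rpow_mul (sq_nonneg s),
        ← Real.rpow_mul (by positivity), ← Real.rpow_mul (by positivity)] at key2
    have hexm : (m : ℝ) / t * ((t : ℝ) / 2) = (m : ℝ) / 2 := by field_simp
    have hexk : (k : ℝ) / t * ((t : ℝ) / 2) = (k : ℝ) / 2 := by field_simp
    rw [hexm, hexk] at key2
    have hc : (c ^ 2 : ℝ) ^ ((m : ℝ) / 2) = |c| ^ m := by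
      rw [show (m : ℝ) / 2 = 1 / 2 * m by ring, Real.rpow_mul (sq_nonneg c),
        Real.rpow_natCast, ← Real.sqrt_eq_rpow, Real.sqrt_sq_eq_abs]
    have hs : (s ^ 2 : ℝ) ^ ((k : ℝ) / 2) = |s| ^ k := by
      rw [show (k : ℝ) / 2 = 1 / 2 * k by ring, Real.rpow_mul (sq_nonneg s),
        Real.rpow_natCast, ← Real.sqrt_eq_rpow, Real.sqrt_sq_eq_abs]
    rw [hc, hs] at key2
    rw [hcast]
    calc (2 : ℝ) ^ t * |c| ^ (t - k) * |s| ^ k = 2 ^ t * (|c| ^ m * |s| ^ k) := by ring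
      _ ≤ 2 ^ t * (((m : ℝ) / t) ^ ((m : ℝ) / 2) * ((k : ℝ) / t) ^ ((k : ℝ) / 2)) := by
          apply mul_le_mul_of_nonneg_left key2 (by positivity)
      _ = 2 ^ t * ((m : ℝ) / t) ^ ((m : ℝ) / 2) * ((k : ℝ) / t) ^ ((k : ℝ) / 2) := by ring
end
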